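/- Let n ≥ 1, 1 < p < ∞, 1 ≤ q < ∞, m' ≥ 0, and C₀ > 0. Let (F_j)_{j∈ℤ} and (G_j)_{j∈ℤ} be families of measurable functions ℝⁿ → [0,∞] such that for every j ∈ ℤ and every x ∈ ℝⁿ, F_j(x) ≤ C₀ · Σ_{j'∈ℤ, |j−j'|≤1} M G_{j'}(x). Then there exists a constant C > 0, depending only on n, p, q, m', C₀, such that sup_{j_t∈ℤ} Σ_{j<j_t} ( 2^{2(j−j_t)m'} · 2^{j(n/p−1)} · ‖F_j‖_{L^{p,∞}} )^q ≤ C · Σ_{j'∈ℤ} ( 2^{j'(n/p−1)} · ‖G_{j'}‖_{L^{p,∞}} )^q. -/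

import Mathlib

open Metric Set
open scoped NNReal


open MeasureTheory ENNReal

/-- The Hardy–Littlewood maximal function of `g : ℝⁿ → [0,∞]`. -/
noncomputable def maxFn (n : ℕ) (g : EuclideanSpace ℝ (Fin n) → ℝ≥0∞)
    (x : EuclideanSpace ℝ (Fin n)) : ℝ≥0∞ :=
  ⨆ (r : ℝ) (_ : 0 < r), (∫⁻ y in Metric.ball x r, g y) / volume (Metric.ball x r)

/-- The weak-`L^p` quasinorm `sup_{λ>0} λ |{x : h x > λ}|^{1/p}` of `h : ℝⁿ → [0,∞]`. -/
noncomputable def wLp (n : ℕ) (p : ℝ) (h : EuclideanSpace ℝ (Fin n) → ℝ≥0∞) : ℝ≥0∞ :=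
  ⨆ (l : NNReal) (_ : 0 < l), (l : ℝ≥0∞) * (volume {x | (l : ℝ≥0∞) < h x}) ^ (1 / p)


section weak11
variable {n : ℕ}

lemma euclid_nontrivial (hn : 1 ≤ n) : Nontrivial (EuclideanSpace ℝ (Fin n)) := by
  apply Module.nontrivial_of_finrank_pos (R := ℝ)
  rw [finrank_euclideanSpace_fin]; omega

lemma weak11 (hn : 1 ≤ n) (g : EuclideanSpace ℝ (Fin n) → ℝ≥0∞) (hg : Measurable g)
    (l : ℝ≥0∞) (hl0 : l ≠ 0) (hlt : l ≠ ∞) :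
    l * volume {x | l < maxFn n g x} ≤ ENNReal.ofReal (4 ^ n) * ∫⁻ y, g y := by
  haveI : Nontrivial (EuclideanSpace ℝ (Fin n)) := euclid_nontrivial hn
  set I := ∫⁻ y, g y with hIdef
  by_cases hI : I = ∞
  · rw [hI, ENNReal.mul_top (by positivity)]; exact le_top
  set S := {x : EuclideanSpace ℝ (Fin n) | l < maxFn n g x} with hS
  have key : ∀ x ∈ S, ∃ r : ℝ, 0 < r ∧ l * volume (ball x r) < ∫⁻ y in ball x r, g y := by
    intro x hx
    have hx' : l < maxFn n g x := hx
    rw [maxFn, lt_iSup_iff] at hx'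
    obtain ⟨r, hr⟩ := hx'
    rw [lt_iSup_iff] at hr
    obtain ⟨hr0, h⟩ := hr
    refine ⟨r, hr0, ?_⟩
    exact (ENNReal.lt_div_iff_mul_lt (Or.inl (measure_ball_pos volume x hr0).ne')
      (Or.inl measure_ball_lt_top.ne)).mp h
  choose! r hr0 hrlt using key
  have hball_le : ∀ x ∈ S, l * volume (ball x (r x)) ≤ I :=
    fun x hx => ((hrlt x hx).le.trans (setLIntegral_le_lintegral _ _))
  set v1 := volume (ball (0 : EuclideanSpace ℝ (Fin n)) 1) with hv1
  have hv10 : v1 ≠ 0 := (measure_ball_pos volume _ one_pos).ne'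
  have hv1t : v1 ≠ ∞ := measure_ball_lt_top.ne
  set R : ℝ := max 1 ((I / (l * v1)).toReal) with hR
  have hrR : ∀ x ∈ S, r x ≤ R := by
    intro x hx
    have hb : volume (ball x (r x)) = ENNReal.ofReal (r x ^ n) * v1 := by
      rw [hv1, Measure.addHaar_ball volume x (hr0 x hx).le, finrank_euclideanSpace_fin]
    have h1 : ENNReal.ofReal (r x ^ n) * (l * v1) ≤ I := by
      have := hball_le x hx
      rw [hb] at this
      calc ENNReal.ofReal (r x ^ n) * (l * v1) = l * (ENNReal.ofReal (r x ^ n) * v1) := by ring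
        _ ≤ I := this
    have hlv0 : l * v1 ≠ 0 := by simp [hl0, hv10]
    have hlvt : l * v1 ≠ ∞ := ENNReal.mul_ne_top hlt hv1t
    have h2 : ENNReal.ofReal (r x ^ n) ≤ I / (l * v1) :=
      (ENNReal.le_div_iff_mul_le (Or.inl hlv0) (Or.inl hlvt)).mpr h1
    have h3 : r x ^ n ≤ (I / (l * v1)).toReal := by
      rw [← ENNReal.ofReal_le_iff_le_toReal (ENNReal.div_lt_top hI hlv0).ne] at *
      exact h2
    rcases le_or_gt (r x) 1 with h | h
    · exact h.trans (le_max_left _ _)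
    · refine le_trans ?_ (le_max_right _ _)
      exact le_trans (le_self_pow₀ h.le (by omega)) h3
  obtain ⟨u, huS, hdisj, hcover⟩ :=
    Vitali.exists_disjoint_subfamily_covering_enlargement_closedBall S id r R hrR 4 (by norm_num)
  have hu_cnt : u.Countable := by
    apply hdisj.countable_of_nonempty_interior
    intro b hb
    exact ⟨b, ball_subset_interior_closedBall (mem_ball_self (hr0 b (huS hb)))⟩
  have hScover : S ⊆ ⋃ b ∈ u, closedBall b (4 * r b) := by
    intro x hx
    obtain ⟨b, hb, hsub⟩ := hcover x hx
    exact mem_biUnion hb (hsub (mem_closedBall_self (hr0 x hx).le))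
  set ν := volume.withDensity g with hν
  have hterm : ∀ b ∈ u, volume (closedBall b (4 * r b)) ≤
      ENNReal.ofReal (4 ^ n) * (ν (ball b (r b)) / l) := by
    intro b hb
    have hrb := hr0 b (huS hb)
    have e1 : volume (closedBall b (4 * r b)) =
        ENNReal.ofReal ((4:ℝ) ^ n) * volume (closedBall b (r b)) := by
      rw [Measure.addHaar_closedBall_mul volume b (by norm_num : (0:ℝ) ≤ 4) hrb.le,
        finrank_euclideanSpace_fin, Measure.addHaar_closedBall_center volume (0:EuclideanSpace ℝ (Fin n)),
        ← Measure.addHaar_closedBall_center volume b]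
    have e2 : volume (closedBall b (r b)) = volume (ball b (r b)) :=
      Measure.addHaar_closedBall_eq_addHaar_ball volume b (r b)
    have e3 : volume (ball b (r b)) ≤ ν (ball b (r b)) / l := by
      rw [hν, withDensity_apply g measurableSet_ball]
      exact (ENNReal.le_div_iff_mul_le (Or.inl hl0) (Or.inl hlt)).mpr
        (by rw [mul_comm]; exact (hrlt b (huS hb)).le)
    rw [e1, e2]
    exact mul_le_mul_right e3 _
  have hsum : ∑' b : u, ν (ball (b : EuclideanSpace ℝ (Fin n)) (r b)) ≤ I := by
    have hd2 : u.PairwiseDisjoint fun a => ball a (r a) :=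
      hdisj.mono (fun b => ball_subset_closedBall)
    rw [← measure_biUnion (μ := ν) hu_cnt hd2 (fun b _ => measurableSet_ball)]
    have : ν Set.univ = I := by
      rw [hν, withDensity_apply g MeasurableSet.univ, setLIntegral_univ]
    rw [← this]
    exact measure_mono (subset_univ _)
  have hvolS : volume S ≤ ENNReal.ofReal (4 ^ n) * (I / l) := by
    calc volume S ≤ volume (⋃ b ∈ u, closedBall b (4 * r b)) := measure_mono hScover
      _ ≤ ∑' b : u, volume (closedBall (b : EuclideanSpace ℝ (Fin n)) (4 * r b)) := measure_biUnion_le volume hu_cnt _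
      _ ≤ ∑' b : u, ENNReal.ofReal (4 ^ n) * (ν (ball (b:EuclideanSpace ℝ (Fin n)) (r b)) / l) :=
          ENNReal.tsum_le_tsum (fun b => hterm b b.2)
      _ = ENNReal.ofReal (4 ^ n) * ((∑' b : u, ν (ball (b:EuclideanSpace ℝ (Fin n)) (r b))) / l) := by
          rw [ENNReal.tsum_mul_left]; simp_rw [div_eq_mul_inv, ENNReal.tsum_mul_right]
      _ ≤ ENNReal.ofReal (4 ^ n) * (I / l) := by gcongr
  calc l * volume S ≤ l * (ENNReal.ofReal (4 ^ n) * (I / l)) := mul_le_mul_right hvolS _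
    _ = ENNReal.ofReal (4 ^ n) * (I / l * l) := by ring
    _ ≤ ENNReal.ofReal (4 ^ n) * I := by
        gcongr
        rw [ENNReal.div_mul_cancel hl0 hlt]

end weak11

variable {n : ℕ} {p : ℝ}

lemma le_wLp (h : EuclideanSpace ℝ (Fin n) → ℝ≥0∞) (l : ℝ≥0) (hl : 0 < l) :
    (l : ℝ≥0∞) * (volume {x | (l : ℝ≥0∞) < h x}) ^ (1 / p) ≤ wLp n p h :=
  le_iSup₂ (f := fun (l : ℝ≥0) (_ : 0 < l) =>
    (l : ℝ≥0∞) * (volume {x | (l : ℝ≥0∞) < h x}) ^ (1 / p)) l hl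

lemma wLp_le {h : EuclideanSpace ℝ (Fin n) → ℝ≥0∞} {B : ℝ≥0∞}
    (hb : ∀ l : ℝ≥0, 0 < l → (l : ℝ≥0∞) * (volume {x | (l : ℝ≥0∞) < h x}) ^ (1 / p) ≤ B) :
    wLp n p h ≤ B := iSup₂_le hb

lemma wLp_mono (hp : 0 ≤ p) {h1 h2 : EuclideanSpace ℝ (Fin n) → ℝ≥0∞}
    (hle : ∀ x, h1 x ≤ h2 x) : wLp n p h1 ≤ wLp n p h2 := by
  refine wLp_le fun l hl => ?_
  refine le_trans ?_ (le_wLp h2 l hl)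
  refine mul_le_mul' le_rfl (ENNReal.rpow_le_rpow (measure_mono ?_) (by positivity))
  exact fun x hx => lt_of_lt_of_le hx (hle x)

lemma wLp_tail (hp : 0 < p) (h : EuclideanSpace ℝ (Fin n) → ℝ≥0∞) (l : ℝ≥0) (hl : 0 < l) :
    volume {x | (l : ℝ≥0∞) < h x} ≤ (wLp n p h / l) ^ p := by
  have h1 := le_wLp (p := p) h l hl
  have hl0 : (l : ℝ≥0∞) ≠ 0 := by exact_mod_cast hl.ne'
  have h2 : (volume {x | (l : ℝ≥0∞) < h x}) ^ (1 / p) ≤ wLp n p h / l := by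
    rw [ENNReal.le_div_iff_mul_le (Or.inl hl0) (Or.inl coe_ne_top), mul_comm]
    exact h1
  calc volume {x | (l : ℝ≥0∞) < h x}
      = ((volume {x | (l : ℝ≥0∞) < h x}) ^ (1 / p)) ^ p := by
        rw [← ENNReal.rpow_mul, one_div, inv_mul_cancel₀ hp.ne', ENNReal.rpow_one]
    _ ≤ (wLp n p h / l) ^ p := ENNReal.rpow_le_rpow h2 hp.le

lemma wLp_const_mul (hp : 0 ≤ p) (h : EuclideanSpace ℝ (Fin n) → ℝ≥0∞) (a : ℝ≥0) (ha : a ≠ 0) :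
    wLp n p (fun x => (a : ℝ≥0∞) * h x) ≤ a * wLp n p h := by
  refine wLp_le fun l hl => ?_
  have hla : 0 < l / a := by positivity
  have hset : {x | (l : ℝ≥0∞) < (a : ℝ≥0∞) * h x} ⊆ {x | ((l / a : ℝ≥0) : ℝ≥0∞) < h x} := by
    intro x hx
    simp only [mem_setOf_eq] at hx ⊢
    rw [ENNReal.coe_div ha, ENNReal.div_lt_iff (Or.inl (by exact_mod_cast ha))
      (Or.inl coe_ne_top), mul_comm]
    exact hx
  calc (l : ℝ≥0∞) * (volume {x | (l : ℝ≥0∞) < (a : ℝ≥0∞) * h x}) ^ (1/p)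
      ≤ (l : ℝ≥0∞) * (volume {x | ((l / a : ℝ≥0) : ℝ≥0∞) < h x}) ^ (1/p) :=
        mul_le_mul' le_rfl (ENNReal.rpow_le_rpow (measure_mono hset) (by positivity))
    _ = (a : ℝ≥0∞) * (((l / a : ℝ≥0) : ℝ≥0∞) *
          (volume {x | ((l / a : ℝ≥0) : ℝ≥0∞) < h x}) ^ (1/p)) := by
        rw [← mul_assoc, ← ENNReal.coe_mul]
        congr 2
        rw [mul_comm, div_mul_cancel₀ _ ha]
    _ ≤ a * wLp n p h := by gcongr; exact le_wLp h _ hla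

lemma wLp_add (hp : 1 ≤ p) (h1 h2 : EuclideanSpace ℝ (Fin n) → ℝ≥0∞) :
    wLp n p (fun x => h1 x + h2 x) ≤ 2 * (wLp n p h1 + wLp n p h2) := by
  have hp0 : 0 < p := lt_of_lt_of_le one_pos hp
  refine wLp_le fun l hl => ?_
  have hl2 : 0 < l / 2 := by positivity
  have hcast : ((l / 2 : ℝ≥0) : ℝ≥0∞) = (l : ℝ≥0∞) / 2 := by
    rw [ENNReal.coe_div (by norm_num)]; norm_num
  have hset : {x | (l : ℝ≥0∞) < h1 x + h2 x} ⊆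
      {x | ((l/2 : ℝ≥0) : ℝ≥0∞) < h1 x} ∪ {x | ((l/2 : ℝ≥0) : ℝ≥0∞) < h2 x} := by
    intro x hx
    simp only [mem_setOf_eq, mem_union] at hx ⊢
    by_contra hcon
    push_neg at hcon
    have : h1 x + h2 x ≤ (l : ℝ≥0∞) := by
      calc h1 x + h2 x ≤ (l : ℝ≥0∞)/2 + (l : ℝ≥0∞)/2 := by
            rw [← hcast]; exact add_le_add hcon.1 hcon.2
        _ = l := ENNReal.add_halves _
    exact absurd hx (not_lt.mpr this)
  set v1 := volume {x | ((l/2 : ℝ≥0) : ℝ≥0∞) < h1 x}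
  set v2 := volume {x | ((l/2 : ℝ≥0) : ℝ≥0∞) < h2 x}
  calc (l : ℝ≥0∞) * (volume {x | (l : ℝ≥0∞) < h1 x + h2 x}) ^ (1/p)
      ≤ (l : ℝ≥0∞) * (v1 + v2) ^ (1/p) := by
        gcongr
        exact (measure_mono hset).trans (measure_union_le _ _)
    _ ≤ (l : ℝ≥0∞) * (v1 ^ (1/p) + v2 ^ (1/p)) := by
        gcongr
        exact ENNReal.rpow_add_le_add_rpow _ _ (by positivity) (by
          rw [div_le_one hp0]; linarith)
    _ = 2 * (((l/2 : ℝ≥0) : ℝ≥0∞) * v1 ^ (1/p) + ((l/2 : ℝ≥0) : ℝ≥0∞) * v2 ^ (1/p)) := by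
        have h2l : (2:ℝ≥0∞) * (↑l / 2) = ↑l :=
          ENNReal.mul_div_cancel two_ne_zero ENNReal.ofNat_ne_top
        have key : ∀ X : ℝ≥0∞, 2 * ((l:ℝ≥0∞)/2 * X) = (l:ℝ≥0∞) * X := fun X => by
          rw [← mul_assoc, h2l]
        rw [hcast]
        simp only [mul_add, ← mul_assoc, h2l]
    _ ≤ 2 * (wLp n p h1 + wLp n p h2) := by
        gcongr
        · exact le_wLp h1 _ hl2
        · exact le_wLp h2 _ hl2

section maxfn

lemma le_maxFn (g : EuclideanSpace ℝ (Fin n) → ℝ≥0∞) (x : EuclideanSpace ℝ (Fin n))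
    {r : ℝ} (hr : 0 < r) :
    (∫⁻ y in ball x r, g y) / volume (ball x r) ≤ maxFn n g x :=
  le_iSup₂ (f := fun (r : ℝ) (_ : 0 < r) =>
    (∫⁻ y in ball x r, g y) / volume (ball x r)) r hr

lemma maxFn_le_add {g1 g2 : EuclideanSpace ℝ (Fin n) → ℝ≥0∞} (hg1 : Measurable g1)
    (x : EuclideanSpace ℝ (Fin n)) :
    maxFn n (fun y => g1 y + g2 y) x ≤ maxFn n g1 x + maxFn n g2 x := by
  refine iSup₂_le fun r hr => ?_
  rw [lintegral_add_left hg1, ENNReal.add_div]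
  exact add_le_add (le_maxFn g1 x hr) (le_maxFn g2 x hr)

lemma maxFn_le_const {g : EuclideanSpace ℝ (Fin n) → ℝ≥0∞} {c : ℝ≥0∞}
    (hc : ∀ y, g y ≤ c) (x : EuclideanSpace ℝ (Fin n)) : maxFn n g x ≤ c := by
  refine iSup₂_le fun r hr => ?_
  refine ENNReal.div_le_of_le_mul ?_
  calc ∫⁻ y in ball x r, g y ≤ ∫⁻ _ in ball x r, c := lintegral_mono (fun y => hc y)
    _ = c * volume (ball x r) := setLIntegral_const _ _

end maxfn

/-- The constant in the weak-type `L^{p,∞}` bound for the maximal function. -/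
noncomputable def mC (n : ℕ) (p : ℝ) : ℝ≥0∞ :=
  2 * (2 * ENNReal.ofReal (4 ^ n) * (1 - (2:ℝ≥0∞) ^ ((1:ℝ) - p))⁻¹) ^ (1 / p)

lemma geo_lt_one (hp : 1 < p) : (2:ℝ≥0∞) ^ ((1:ℝ) - p) < 1 := by
  have := ENNReal.rpow_lt_rpow_of_exponent_lt (x := 2) one_lt_two ENNReal.ofNat_ne_top
    (by linarith : (1:ℝ) - p < 0)
  simpa using this

lemma geo_inv_ne_top (hp : 1 < p) : ((1:ℝ≥0∞) - (2:ℝ≥0∞) ^ ((1:ℝ) - p))⁻¹ ≠ ∞ := by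
  rw [ENNReal.inv_ne_top]
  exact (tsub_pos_of_lt (geo_lt_one hp)).ne'

lemma mC_ne_top (hp : 1 < p) : mC n p ≠ ∞ := by
  have hbase : (2:ℝ≥0∞) * ENNReal.ofReal (4 ^ n) *
      ((1:ℝ≥0∞) - (2:ℝ≥0∞) ^ ((1:ℝ) - p))⁻¹ ≠ ∞ :=
    ENNReal.mul_ne_top (ENNReal.mul_ne_top ENNReal.ofNat_ne_top ENNReal.ofReal_ne_top)
      (geo_inv_ne_top hp)
  exact ENNReal.mul_ne_top ENNReal.ofNat_ne_top
    (ENNReal.rpow_ne_top_of_nonneg (by positivity) hbase)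

lemma mC_ne_zero (hp : 1 < p) : mC n p ≠ 0 := by
  have hp0 : (0:ℝ) < 1 / p := by positivity
  refine mul_ne_zero two_ne_zero ?_
  rw [Ne, ENNReal.rpow_eq_zero_iff_of_pos hp0]
  refine mul_ne_zero (mul_ne_zero two_ne_zero ?_) (ENNReal.inv_ne_zero.mpr ?_)
  · simp [ENNReal.ofReal_eq_zero]
  · exact ne_top_of_le_ne_top ENNReal.one_ne_top tsub_le_self



lemma maximal_wLp (hn : 1 ≤ n) (hp : 1 < p)
    (g : EuclideanSpace ℝ (Fin n) → ℝ≥0∞) (hg : Measurable g) :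
    wLp n p (maxFn n g) ≤ mC n p * wLp n p g := by
  have hp0 : (0:ℝ) < p := by linarith
  set A := wLp n p g with hA
  by_cases hAtop : A = ∞
  · rw [hAtop, ENNReal.mul_top (mC_ne_zero hp)]; exact le_top
  set K := ENNReal.ofReal ((4:ℝ) ^ n) with hK
  set r2 := (2:ℝ≥0∞) ^ ((1:ℝ) - p) with hr2
  set Kp := ((1:ℝ≥0∞) - r2)⁻¹ with hKp
  refine wLp_le fun l hl => ?_
  set c : ℝ≥0 := l / 2 with hc
  have hc0 : 0 < c := by positivity
  have hcl : (c : ℝ≥0∞) + (c : ℝ≥0∞) = (l : ℝ≥0∞) := by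
    rw [← ENNReal.coe_add, hc, add_halves]
  set g1 : EuclideanSpace ℝ (Fin n) → ℝ≥0∞ :=
    fun x => if (c:ℝ≥0∞) < g x then g x else 0 with hg1def
  set g2 : EuclideanSpace ℝ (Fin n) → ℝ≥0∞ :=
    fun x => if (c:ℝ≥0∞) < g x then 0 else g x with hg2def
  have hg1m : Measurable g1 := Measurable.ite (measurableSet_lt measurable_const hg)
    hg measurable_const
  have hgsplit : g = fun y => g1 y + g2 y := by
    funext y
    by_cases h : (c:ℝ≥0∞) < g y <;> simp [hg1def, hg2def, h]
  have hM2 : ∀ x, maxFn n g2 x ≤ (c:ℝ≥0∞) := by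
    intro x
    refine maxFn_le_const (fun y => ?_) x
    by_cases h : (c:ℝ≥0∞) < g y <;> simp [hg2def, h]
    exact le_of_not_gt h
  have hsub : {x | (l:ℝ≥0∞) < maxFn n g x} ⊆ {x | (c:ℝ≥0∞) < maxFn n g1 x} := by
    intro x hx
    simp only [mem_setOf_eq] at hx ⊢
    by_contra hcon
    push_neg at hcon
    have : maxFn n g x ≤ (l:ℝ≥0∞) := by
      calc maxFn n g x = maxFn n (fun y => g1 y + g2 y) x := by rw [← hgsplit]
        _ ≤ maxFn n g1 x + maxFn n g2 x := maxFn_le_add hg1m x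
        _ ≤ (c:ℝ≥0∞) + (c:ℝ≥0∞) := add_le_add hcon (hM2 x)
        _ = (l:ℝ≥0∞) := hcl
    exact absurd hx (not_lt.mpr this)
  -- pointwise bound of `g1` by a sum of indicators
  have hpt : ∀ x, g1 x ≤ ∑' k : ℕ,
      Set.indicator {y | ((2^k * c : ℝ≥0) : ℝ≥0∞) < g y}
        (fun _ => ((2^(k+1) * c : ℝ≥0) : ℝ≥0∞)) x := by
    intro x
    by_cases h0 : (c:ℝ≥0∞) < g x
    swap
    · simp [hg1def, h0]
    have hg1x : g1 x = g x := by simp [hg1def, h0]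
    by_cases hfin : ∃ k : ℕ, g x ≤ ((2^k * c : ℝ≥0) : ℝ≥0∞)
    · set k0 := Nat.find hfin with hk0
      have hspec : g x ≤ ((2^k0 * c : ℝ≥0) : ℝ≥0∞) := Nat.find_spec hfin
      have hk0ne : k0 ≠ 0 := by
        intro hzero
        rw [hzero] at hspec
        simp only [pow_zero, one_mul] at hspec
        exact absurd h0 (not_lt.mpr hspec)
      obtain ⟨m, hm⟩ : ∃ m, k0 = m + 1 := ⟨k0 - 1, (Nat.succ_pred_eq_of_pos
        (Nat.pos_of_ne_zero hk0ne)).symm⟩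
      have hmlt : ((2^m * c : ℝ≥0) : ℝ≥0∞) < g x := by
        have := Nat.find_min hfin (by omega : m < k0)
        exact lt_of_not_ge this
      have : g1 x ≤ Set.indicator {y | ((2^m * c : ℝ≥0) : ℝ≥0∞) < g y}
          (fun _ => ((2^(m+1) * c : ℝ≥0) : ℝ≥0∞)) x := by
        rw [Set.indicator_of_mem (by exact hmlt : x ∈ _)]
        rw [hg1x, ← hm]
        exact hspec
      exact this.trans (ENNReal.le_tsum m)
    · push_neg at hfin
      have htop : (⊤:ℝ≥0∞) ≤ ∑' k : ℕ, Set.indicator {y | ((2^k * c : ℝ≥0) : ℝ≥0∞) < g y}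
          (fun _ => ((2^(k+1) * c : ℝ≥0) : ℝ≥0∞)) x := by
        have h2c : ((2 * c : ℝ≥0) : ℝ≥0∞) ≠ 0 := by
          simp only [Ne, ENNReal.coe_eq_zero]
          positivity
        refine le_trans (le_of_eq (tsum_const_eq_top_of_ne_zero h2c).symm)
          (ENNReal.tsum_le_tsum fun k => ?_)
        rw [Set.indicator_of_mem (by exact hfin k : x ∈ _)]
        refine ENNReal.coe_le_coe.mpr ?_
        have h21 : (2:ℝ≥0) ^ 1 ≤ 2 ^ (k+1) := pow_le_pow_right₀ one_le_two (by omega)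
        rw [pow_one] at h21
        exact mul_le_mul_left h21 c
      exact le_top.trans htop
  -- the integral of `g1`
  have hintk : ∫⁻ y, g1 y ≤ ∑' k : ℕ, ((2^(k+1) * c : ℝ≥0) : ℝ≥0∞) *
      volume {y | ((2^k * c : ℝ≥0) : ℝ≥0∞) < g y} := by
    have hmk : ∀ k : ℕ, MeasurableSet {y | ((2^k * c : ℝ≥0) : ℝ≥0∞) < g y} :=
      fun k => measurableSet_lt measurable_const hg
    calc ∫⁻ y, g1 y
        ≤ ∫⁻ y, ∑' k : ℕ, Set.indicator {y' | ((2^k * c : ℝ≥0) : ℝ≥0∞) < g y'}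
            (fun _ => ((2^(k+1) * c : ℝ≥0) : ℝ≥0∞)) y := lintegral_mono hpt
      _ = ∑' k : ℕ, ∫⁻ y, Set.indicator {y' | ((2^k * c : ℝ≥0) : ℝ≥0∞) < g y'}
            (fun _ => ((2^(k+1) * c : ℝ≥0) : ℝ≥0∞)) y :=
          lintegral_tsum (fun k => (measurable_const.indicator (hmk k)).aemeasurable)
      _ = ∑' k : ℕ, ((2^(k+1) * c : ℝ≥0) : ℝ≥0∞) *
            volume {y | ((2^k * c : ℝ≥0) : ℝ≥0∞) < g y} :=
          tsum_congr fun k => lintegral_indicator_const (hmk k) _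
  have htail : ∀ k : ℕ, volume {y | (((2^k * c : ℝ≥0)) : ℝ≥0∞) < g y} ≤
      (A / ((2^k * c : ℝ≥0) : ℝ≥0∞)) ^ p :=
    fun k => wLp_tail hp0 g _ (by positivity)
  -- per-term computation
  have hterm_eq : ∀ k : ℕ, ((2^(k+1) * c : ℝ≥0) : ℝ≥0∞) * (A / ((2^k * c : ℝ≥0) : ℝ≥0∞)) ^ p
      = (2 * (c:ℝ≥0∞) * (A / (c:ℝ≥0∞)) ^ p) * r2 ^ k := by
    intro k
    have hc0' : ((c:ℝ≥0)) ≠ 0 := hc0.ne'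
    have hcE0 : (c : ℝ≥0∞) ≠ 0 := by exact_mod_cast hc0'
    have hcEt : (c : ℝ≥0∞) ≠ ∞ := ENNReal.coe_ne_top
    have h2k0 : ((2:ℝ≥0∞)^k) ≠ 0 := by positivity
    have h2kt : ((2:ℝ≥0∞)^k) ≠ ∞ := by
      exact ENNReal.pow_ne_top ENNReal.ofNat_ne_top
    have hcast1 : ((2^(k+1) * c : ℝ≥0) : ℝ≥0∞) = (2:ℝ≥0∞)^(k+1) * (c:ℝ≥0∞) := by
      push_cast; ring
    have hcast2 : ((2^k * c : ℝ≥0) : ℝ≥0∞) = (2:ℝ≥0∞)^k * (c:ℝ≥0∞) := by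
      push_cast; ring
    rw [hcast1, hcast2]
    have hsplit : (A / ((2:ℝ≥0∞)^k * (c:ℝ≥0∞))) ^ p
        = A ^ p * ((((2:ℝ≥0∞)^k) ^ p)⁻¹ * ((c:ℝ≥0∞) ^ p)⁻¹) := by
      rw [ENNReal.div_rpow_of_nonneg _ _ hp0.le, ENNReal.mul_rpow_of_nonneg _ _ hp0.le,
        div_eq_mul_inv, ENNReal.mul_inv
          (Or.inl (by simp [ENNReal.rpow_eq_zero_iff_of_pos hp0, h2k0]))
          (Or.inl (ENNReal.rpow_ne_top_of_nonneg hp0.le h2kt))]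
    have hsplit2 : (A / (c:ℝ≥0∞)) ^ p = A ^ p * ((c:ℝ≥0∞) ^ p)⁻¹ := by
      rw [ENNReal.div_rpow_of_nonneg _ _ hp0.le, div_eq_mul_inv]
    have key : (2:ℝ≥0∞)^(k+1) * (((2:ℝ≥0∞)^k) ^ p)⁻¹ = 2 * r2 ^ k := by
      have e1 : (2:ℝ≥0∞)^(k+1) = (2:ℝ≥0∞) ^ (((k:ℝ) + 1)) := by
        rw [← ENNReal.rpow_natCast 2 (k+1)]; norm_num
      have e2 : (((2:ℝ≥0∞)^k) ^ p)⁻¹ = (2:ℝ≥0∞) ^ (-((k:ℝ) * p)) := by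
        rw [← ENNReal.rpow_natCast 2 k, ← ENNReal.rpow_mul, ← ENNReal.rpow_neg]
      have e3 : (2:ℝ≥0∞) * r2 ^ k = (2:ℝ≥0∞) ^ ((1:ℝ) + (1 - p) * (k:ℝ)) := by
        rw [hr2, ← ENNReal.rpow_natCast ((2:ℝ≥0∞) ^ ((1:ℝ) - p)) k, ← ENNReal.rpow_mul,
          ENNReal.rpow_add _ _ two_ne_zero ENNReal.ofNat_ne_top, ENNReal.rpow_one]
      rw [e1, e2, e3, ← ENNReal.rpow_add _ _ two_ne_zero ENNReal.ofNat_ne_top]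
      congr 1
      ring
    calc (2:ℝ≥0∞)^(k+1) * (c:ℝ≥0∞) * (A / ((2:ℝ≥0∞)^k * (c:ℝ≥0∞))) ^ p
        = ((2:ℝ≥0∞)^(k+1) * (((2:ℝ≥0∞)^k) ^ p)⁻¹) *
            ((c:ℝ≥0∞) * (A ^ p * ((c:ℝ≥0∞) ^ p)⁻¹)) := by rw [hsplit]; ring
      _ = (2 * r2 ^ k) * ((c:ℝ≥0∞) * (A ^ p * ((c:ℝ≥0∞) ^ p)⁻¹)) := by rw [key]
      _ = (2 * (c:ℝ≥0∞) * (A / (c:ℝ≥0∞)) ^ p) * r2 ^ k := by rw [hsplit2]; ring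
  -- sum the geometric series
  have hsum1 : ∫⁻ y, g1 y ≤ (2 * (c:ℝ≥0∞) * (A / (c:ℝ≥0∞)) ^ p) * Kp := by
    calc ∫⁻ y, g1 y ≤ ∑' k : ℕ, ((2^(k+1) * c : ℝ≥0) : ℝ≥0∞) *
          volume {y | ((2^k * c : ℝ≥0) : ℝ≥0∞) < g y} := hintk
      _ ≤ ∑' k : ℕ, ((2^(k+1) * c : ℝ≥0) : ℝ≥0∞) * (A / ((2^k * c : ℝ≥0) : ℝ≥0∞)) ^ p :=
          ENNReal.tsum_le_tsum fun k => mul_le_mul' le_rfl (htail k)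
      _ = ∑' k : ℕ, (2 * (c:ℝ≥0∞) * (A / (c:ℝ≥0∞)) ^ p) * r2 ^ k :=
          tsum_congr hterm_eq
      _ = (2 * (c:ℝ≥0∞) * (A / (c:ℝ≥0∞)) ^ p) * ∑' k : ℕ, r2 ^ k :=
          ENNReal.tsum_mul_left
      _ = (2 * (c:ℝ≥0∞) * (A / (c:ℝ≥0∞)) ^ p) * Kp := by
          rw [ENNReal.tsum_geometric, hKp]
  have hcE0 : (c : ℝ≥0∞) ≠ 0 := by exact_mod_cast hc0.ne'
  have hcEt : (c : ℝ≥0∞) ≠ ∞ := ENNReal.coe_ne_top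
  -- weak (1,1) for g1, and cancellation of c
  have hvol : volume {x | (l:ℝ≥0∞) < maxFn n g x} ≤ (2 * K * Kp) * (A / (c:ℝ≥0∞)) ^ p := by
    have h1 : (c:ℝ≥0∞) * volume {x | (c:ℝ≥0∞) < maxFn n g1 x} ≤ K * ∫⁻ y, g1 y :=
      weak11 hn g1 hg1m (c:ℝ≥0∞) hcE0 hcEt
    have h2 : (c:ℝ≥0∞) * volume {x | (c:ℝ≥0∞) < maxFn n g1 x}
        ≤ (c:ℝ≥0∞) * ((2 * K * Kp) * (A / (c:ℝ≥0∞)) ^ p) := by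
      refine h1.trans ?_
      calc K * ∫⁻ y, g1 y ≤ K * ((2 * (c:ℝ≥0∞) * (A / (c:ℝ≥0∞)) ^ p) * Kp) :=
            mul_le_mul' le_rfl hsum1
        _ = (c:ℝ≥0∞) * ((2 * K * Kp) * (A / (c:ℝ≥0∞)) ^ p) := by ring
    have h3 := (ENNReal.mul_le_mul_iff_right hcE0 hcEt).mp h2
    exact (measure_mono hsub).trans h3
  -- conclude
  have hfinal : (l:ℝ≥0∞) * (volume {x | (l:ℝ≥0∞) < maxFn n g x}) ^ (1/p)
      ≤ (2 * K * Kp) ^ (1/p) * ((l:ℝ≥0∞) * (A / (c:ℝ≥0∞))) := by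
    calc (l:ℝ≥0∞) * (volume {x | (l:ℝ≥0∞) < maxFn n g x}) ^ (1/p)
        ≤ (l:ℝ≥0∞) * ((2 * K * Kp) * (A / (c:ℝ≥0∞)) ^ p) ^ (1/p) :=
          mul_le_mul' le_rfl (ENNReal.rpow_le_rpow hvol (by positivity))
      _ = (l:ℝ≥0∞) * ((2 * K * Kp) ^ (1/p) * (A / (c:ℝ≥0∞))) := by
          rw [ENNReal.mul_rpow_of_nonneg _ _ (by positivity : (0:ℝ) ≤ 1/p),
            ← ENNReal.rpow_mul, mul_one_div_cancel hp0.ne', ENNReal.rpow_one]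
      _ = (2 * K * Kp) ^ (1/p) * ((l:ℝ≥0∞) * (A / (c:ℝ≥0∞))) := by ring
  have hlA : (l:ℝ≥0∞) * (A / (c:ℝ≥0∞)) = 2 * A := by
    have hcEl : (c : ℝ≥0∞) = (l:ℝ≥0∞) / 2 := by
      rw [hc, ENNReal.coe_div (by norm_num)]
      norm_num
    have hinv : ((l:ℝ≥0∞)/2)⁻¹ = (l:ℝ≥0∞)⁻¹ * 2 := by
      rw [div_eq_mul_inv, ENNReal.mul_inv (Or.inr (by simp)) (Or.inr (by simp)), inv_inv]
    have hl0' : (l:ℝ≥0∞) ≠ 0 := by exact_mod_cast hl.ne'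
    calc (l:ℝ≥0∞) * (A / (c:ℝ≥0∞)) = (l:ℝ≥0∞) * (A * ((l:ℝ≥0∞)⁻¹ * 2)) := by
          rw [hcEl, div_eq_mul_inv, hinv]
      _ = ((l:ℝ≥0∞) * (l:ℝ≥0∞)⁻¹) * (A * 2) := by ring
      _ = 2 * A := by rw [ENNReal.mul_inv_cancel hl0' ENNReal.coe_ne_top]; ring
  calc (l:ℝ≥0∞) * (volume {x | (l:ℝ≥0∞) < maxFn n g x}) ^ (1/p)
      ≤ (2 * K * Kp) ^ (1/p) * ((l:ℝ≥0∞) * (A / (c:ℝ≥0∞))) := hfinal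
    _ = (2 * K * Kp) ^ (1/p) * (2 * A) := by rw [hlA]
    _ = mC n p * A := by rw [mC, hK, hKp, hr2]; ring


lemma rpow3 {q : ℝ} (hq : 0 ≤ q) (x y z : ℝ≥0∞) :
    (x + (y + z)) ^ q ≤ 3 ^ q * (x ^ q + (y ^ q + z ^ q)) := by
  set M := x ⊔ (y ⊔ z) with hM
  have hm : x + (y + z) ≤ 3 * M := by
    have hx : x ≤ M := le_sup_left
    have hy : y ≤ M := le_sup_of_le_right le_sup_left
    have hz : z ≤ M := le_sup_of_le_right le_sup_right
    calc x + (y + z) ≤ M + (M + M) := by gcongr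
      _ = 3 * M := by ring
  have hMq : M ^ q ≤ x ^ q + (y ^ q + z ^ q) := by
    rcases le_total x (y ⊔ z) with h | h
    · rcases le_total y z with h' | h'
      · rw [hM, sup_eq_right.mpr h, sup_eq_right.mpr h']
        exact le_add_self.trans le_add_self
      · rw [hM, sup_eq_right.mpr h, sup_eq_left.mpr h']
        exact le_self_add.trans le_add_self
    · rw [hM, sup_eq_left.mpr h]
      exact le_self_add
  calc (x + (y + z)) ^ q ≤ (3 * M) ^ q := ENNReal.rpow_le_rpow hm hq
    _ = 3 ^ q * M ^ q := ENNReal.mul_rpow_of_nonneg _ _ hq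
    _ ≤ 3 ^ q * (x ^ q + (y ^ q + z ^ q)) := mul_le_mul' le_rfl hMq

/-- Section 3.3 (low-frequency estimate, core of Theorem 1.1): if
`F_j ≤ C₀ ∑_{|j-j'|≤1} M G_{j'}` pointwise, then
`sup_{j_t} ∑_{j<j_t} (2^{2(j-j_t)m'} 2^{j(n/p-1)} ‖F_j‖_{L^{p,∞}})^q
  ≤ C ∑_{j'} (2^{j'(n/p-1)} ‖G_{j'}‖_{L^{p,∞}})^q`. -/
theorem low_frequency_estimate (n : ℕ) (hn : 1 ≤ n) (p q m' : ℝ)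
    (hp : 1 < p) (hq : 1 ≤ q) (hm' : 0 ≤ m') (C₀ : NNReal) (hC₀ : 0 < C₀)
    (F G : ℤ → EuclideanSpace ℝ (Fin n) → ℝ≥0∞)
    (hF : ∀ j, Measurable (F j)) (hG : ∀ j, Measurable (G j))
    (hFG : ∀ (j : ℤ) (x : EuclideanSpace ℝ (Fin n)),
      F j x ≤ (C₀ : ℝ≥0∞) * ∑' j' : {j' : ℤ // |j - j'| ≤ 1}, maxFn n (G j'.1) x) :
    ∃ C : NNReal, 0 < C ∧
      (⨆ jt : ℤ, ∑' j : {j : ℤ // j < jt},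
          ((2 : ℝ≥0∞) ^ (2 * ((j.1 : ℝ) - (jt : ℝ)) * m') *
            (2 : ℝ≥0∞) ^ ((j.1 : ℝ) * ((n : ℝ) / p - 1)) * wLp n p (F j.1)) ^ q)
        ≤ (C : ℝ≥0∞) *
          ∑' j' : ℤ, ((2 : ℝ≥0∞) ^ ((j' : ℝ) * ((n : ℝ) / p - 1)) * wLp n p (G j')) ^ q := by
  have hp0 : (0:ℝ) < p := by linarith
  have hq0 : (0:ℝ) ≤ q := by linarith
  set α : ℝ := (n:ℝ) / p - 1 with hα
  set β : ℝ := |α| with hβ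
  set τ : ℤ → ℝ≥0∞ := fun j => (2:ℝ≥0∞) ^ ((j:ℝ) * α) with hτ
  set w : ℤ → ℝ≥0∞ := fun j => wLp n p (G j) with hw
  set b : ℤ → ℝ≥0∞ := fun j => τ j * w j with hb
  set c2 : ℝ≥0∞ := (C₀ : ℝ≥0∞) * (4 * mC n p) with hc2
  -- Step A: wLp (F j) ≤ c2 * (w (j-1) + (w j + w (j+1)))
  have stepA : ∀ j : ℤ, wLp n p (F j) ≤ c2 * (w (j-1) + (w j + w (j+1))) := by
    intro j
    have hsum3 : ∀ x, (∑' j' : {j' : ℤ // |j - j'| ≤ 1}, maxFn n (G j'.1) x) ≤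
        maxFn n (G (j-1)) x + (maxFn n (G j) x + maxFn n (G (j+1)) x) := by
      intro x
      set f : ℤ → ℝ≥0∞ := fun j' => maxFn n (G j') x with hf
      have hmem : ∀ j' : ℤ, |j - j'| ≤ 1 ↔ j' ∈ ({j-1, j, j+1} : Finset ℤ) := by
        intro j'; simp only [Finset.mem_insert, Finset.mem_singleton, abs_le]; omega
      have e1 : (∑' j' : {j' : ℤ // |j - j'| ≤ 1}, f j'.1)
          = ∑' j' : ℤ, Set.indicator {j' : ℤ | |j - j'| ≤ 1} f j' := tsum_subtype _ f
      rw [e1]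
      have e2 : (∑' j' : ℤ, Set.indicator {j' : ℤ | |j - j'| ≤ 1} f j')
          = ∑ j' ∈ ({j-1, j, j+1} : Finset ℤ), Set.indicator {j' : ℤ | |j - j'| ≤ 1} f j' := by
        refine tsum_eq_sum fun j' hj' => ?_
        refine Set.indicator_of_notMem ?_ f
        intro hmem'
        exact hj' ((hmem j').mp hmem')
      rw [e2]
      have h1 : ((j:ℤ)-1) ∈ {j' : ℤ | |j - j'| ≤ 1} := by
        simp only [mem_setOf_eq, abs_le]; omega
      have h2 : (j:ℤ) ∈ {j' : ℤ | |j - j'| ≤ 1} := by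
        simp only [mem_setOf_eq, abs_le]; omega
      have h3 : ((j:ℤ)+1) ∈ {j' : ℤ | |j - j'| ≤ 1} := by
        simp only [mem_setOf_eq, abs_le]; omega
      rw [Finset.sum_insert (by simp only [Finset.mem_insert, Finset.mem_singleton]; omega),
        Finset.sum_insert (by simp only [Finset.mem_singleton]; omega),
        Finset.sum_singleton, Set.indicator_of_mem h1, Set.indicator_of_mem h2,
        Set.indicator_of_mem h3]
    have hptF : ∀ x, F j x ≤ (C₀ : ℝ≥0∞) *
        (maxFn n (G (j-1)) x + (maxFn n (G j) x + maxFn n (G (j+1)) x)) :=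
      fun x => (hFG j x).trans (mul_le_mul' le_rfl (hsum3 x))
    calc wLp n p (F j)
        ≤ wLp n p (fun x => (C₀ : ℝ≥0∞) *
            (maxFn n (G (j-1)) x + (maxFn n (G j) x + maxFn n (G (j+1)) x))) :=
          wLp_mono hp0.le hptF
      _ ≤ (C₀ : ℝ≥0∞) * wLp n p (fun x =>
            maxFn n (G (j-1)) x + (maxFn n (G j) x + maxFn n (G (j+1)) x)) :=
          wLp_const_mul hp0.le _ C₀ hC₀.ne'
      _ ≤ (C₀ : ℝ≥0∞) * (2 * (wLp n p (maxFn n (G (j-1))) +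
            wLp n p (fun x => maxFn n (G j) x + maxFn n (G (j+1)) x))) :=
          mul_le_mul' le_rfl (wLp_add hp.le _ _)
      _ ≤ (C₀ : ℝ≥0∞) * (2 * (wLp n p (maxFn n (G (j-1))) +
            2 * (wLp n p (maxFn n (G j)) + wLp n p (maxFn n (G (j+1)))))) := by
          gcongr
          exact wLp_add hp.le _ _
      _ ≤ (C₀ : ℝ≥0∞) * (4 * (wLp n p (maxFn n (G (j-1))) +
            (wLp n p (maxFn n (G j)) + wLp n p (maxFn n (G (j+1)))))) := by
          rw [ENNReal.mul_le_mul_iff_right (by simp [hC₀.ne']) ENNReal.coe_ne_top]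
          set X := wLp n p (maxFn n (G (j-1)))
          set Y := wLp n p (maxFn n (G j))
          set Z := wLp n p (maxFn n (G (j+1)))
          calc 2 * (X + 2 * (Y + Z)) = 2 * X + 4 * (Y + Z) := by ring
            _ ≤ 4 * X + 4 * (Y + Z) := by gcongr <;> norm_num
            _ = 4 * (X + (Y + Z)) := by ring
      _ ≤ (C₀ : ℝ≥0∞) * (4 * (mC n p * w (j-1) + (mC n p * w j + mC n p * w (j+1)))) := by
          gcongr <;> exact maximal_wLp hn hp _ (hG _)
      _ = c2 * (w (j-1) + (w j + w (j+1))) := by rw [hc2]; ring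
  -- Step B: shift estimate for the weights
  have hshift : ∀ (j i : ℤ), |i| ≤ 1 → τ j ≤ 2 ^ β * τ (j + i) := by
    intro j i hi
    have hiR : |(i:ℝ)| ≤ 1 := by
      rw [← Int.cast_abs]; exact_mod_cast hi
    have hexp : (j:ℝ) * α ≤ β + ((j + i : ℤ):ℝ) * α := by
      push_cast
      have h1 : -((i:ℝ) * α) ≤ |(i:ℝ) * α| := neg_le_abs _
      have h2 : |(i:ℝ) * α| = |(i:ℝ)| * |α| := abs_mul _ _
      nlinarith [abs_nonneg α]
    calc τ j = (2:ℝ≥0∞) ^ ((j:ℝ) * α) := rfl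
      _ ≤ (2:ℝ≥0∞) ^ (β + ((j + i : ℤ):ℝ) * α) :=
          ENNReal.rpow_le_rpow_of_exponent_le one_le_two hexp
      _ = 2 ^ β * τ (j + i) := by
          rw [ENNReal.rpow_add _ _ two_ne_zero ENNReal.ofNat_ne_top]
  set c3 : ℝ≥0∞ := c2 * 2 ^ β with hc3
  have stepB : ∀ j : ℤ, τ j * wLp n p (F j) ≤ c3 * (b (j-1) + (b j + b (j+1))) := by
    intro j
    have hm1 : τ j * w (j-1) ≤ 2 ^ β * b (j-1) := by
      have := hshift j (-1) (by norm_num)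
      have h' : j + (-1) = j - 1 := by ring
      rw [h'] at this
      calc τ j * w (j-1) ≤ (2 ^ β * τ (j-1)) * w (j-1) := mul_le_mul_left this _
        _ = 2 ^ β * b (j-1) := by rw [hb]; ring
    have hm2 : τ j * w j ≤ 2 ^ β * b j := by
      have := hshift j 0 (by norm_num)
      have h' : j + 0 = j := by ring
      rw [h'] at this
      calc τ j * w j ≤ (2 ^ β * τ j) * w j := mul_le_mul_left this _
        _ = 2 ^ β * b j := by rw [hb]; ring
    have hm3 : τ j * w (j+1) ≤ 2 ^ β * b (j+1) := by
      have := hshift j 1 (by norm_num)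
      calc τ j * w (j+1) ≤ (2 ^ β * τ (j+1)) * w (j+1) := mul_le_mul_left this _
        _ = 2 ^ β * b (j+1) := by rw [hb]; ring
    calc τ j * wLp n p (F j) ≤ τ j * (c2 * (w (j-1) + (w j + w (j+1)))) :=
          mul_le_mul' le_rfl (stepA j)
      _ = c2 * (τ j * w (j-1) + (τ j * w j + τ j * w (j+1))) := by ring
      _ ≤ c2 * (2 ^ β * b (j-1) + (2 ^ β * b j + 2 ^ β * b (j+1))) := by
          gcongr
      _ = c3 * (b (j-1) + (b j + b (j+1))) := by rw [hc3]; ring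
  -- Step C/D: sum over j
  set S : ℝ≥0∞ := ∑' j' : ℤ, (b j') ^ q with hS
  have stepD : (∑' j : ℤ, (τ j * wLp n p (F j)) ^ q) ≤ c3 ^ q * 3 ^ q * (3 * S) := by
    have hterm : ∀ j : ℤ, (τ j * wLp n p (F j)) ^ q ≤
        c3 ^ q * 3 ^ q * ((b (j-1)) ^ q + ((b j) ^ q + (b (j+1)) ^ q)) := by
      intro j
      calc (τ j * wLp n p (F j)) ^ q ≤ (c3 * (b (j-1) + (b j + b (j+1)))) ^ q :=
            ENNReal.rpow_le_rpow (stepB j) hq0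
        _ = c3 ^ q * (b (j-1) + (b j + b (j+1))) ^ q :=
            ENNReal.mul_rpow_of_nonneg _ _ hq0
        _ ≤ c3 ^ q * (3 ^ q * ((b (j-1)) ^ q + ((b j) ^ q + (b (j+1)) ^ q))) :=
            mul_le_mul' le_rfl (rpow3 hq0 _ _ _)
        _ = c3 ^ q * 3 ^ q * ((b (j-1)) ^ q + ((b j) ^ q + (b (j+1)) ^ q)) := by ring
    have hre1 : (∑' j : ℤ, (b (j-1)) ^ q) = S := by
      rw [hS]
      exact Equiv.tsum_eq (Equiv.subRight (1:ℤ)) (fun j => (b j) ^ q)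
    have hre2 : (∑' j : ℤ, (b (j+1)) ^ q) = S := by
      rw [hS]
      exact Equiv.tsum_eq (Equiv.addRight (1:ℤ)) (fun j => (b j) ^ q)
    calc (∑' j : ℤ, (τ j * wLp n p (F j)) ^ q)
        ≤ ∑' j : ℤ, c3 ^ q * 3 ^ q * ((b (j-1)) ^ q + ((b j) ^ q + (b (j+1)) ^ q)) :=
          ENNReal.tsum_le_tsum hterm
      _ = c3 ^ q * 3 ^ q * ∑' j : ℤ, ((b (j-1)) ^ q + ((b j) ^ q + (b (j+1)) ^ q)) :=
          ENNReal.tsum_mul_left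
      _ = c3 ^ q * 3 ^ q * ((∑' j : ℤ, (b (j-1)) ^ q) +
            ((∑' j : ℤ, (b j) ^ q) + (∑' j : ℤ, (b (j+1)) ^ q))) := by
          rw [ENNReal.tsum_add]
          congr 1
          rw [ENNReal.tsum_add]
      _ = c3 ^ q * 3 ^ q * (3 * S) := by
          rw [hre1, hre2, ← hS]; ring
  -- Step E: the supremum over jt
  have stepE : (⨆ jt : ℤ, ∑' j : {j : ℤ // j < jt},
      ((2 : ℝ≥0∞) ^ (2 * ((j.1 : ℝ) - (jt : ℝ)) * m') *
        (2 : ℝ≥0∞) ^ ((j.1 : ℝ) * α) * wLp n p (F j.1)) ^ q)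
      ≤ ∑' j : ℤ, (τ j * wLp n p (F j)) ^ q := by
    refine iSup_le fun jt => ?_
    have hterm : ∀ j : {j : ℤ // j < jt},
        ((2 : ℝ≥0∞) ^ (2 * ((j.1 : ℝ) - (jt : ℝ)) * m') *
          (2 : ℝ≥0∞) ^ ((j.1 : ℝ) * α) * wLp n p (F j.1)) ^ q
        ≤ (τ j.1 * wLp n p (F j.1)) ^ q := by
      intro j
      have hjlt : (j.1 : ℝ) < (jt : ℝ) := by exact_mod_cast j.2
      have hone : (2 : ℝ≥0∞) ^ (2 * ((j.1 : ℝ) - (jt : ℝ)) * m') ≤ 1 := by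
        have : (2 : ℝ≥0∞) ^ (2 * ((j.1 : ℝ) - (jt : ℝ)) * m') ≤ 2 ^ (0:ℝ) := by
          refine ENNReal.rpow_le_rpow_of_exponent_le one_le_two ?_
          nlinarith
        simpa using this
      refine ENNReal.rpow_le_rpow ?_ hq0
      calc (2 : ℝ≥0∞) ^ (2 * ((j.1 : ℝ) - (jt : ℝ)) * m') *
            (2 : ℝ≥0∞) ^ ((j.1 : ℝ) * α) * wLp n p (F j.1)
          ≤ 1 * (2 : ℝ≥0∞) ^ ((j.1 : ℝ) * α) * wLp n p (F j.1) := by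
            gcongr
        _ = τ j.1 * wLp n p (F j.1) := by rw [one_mul]
    calc (∑' j : {j : ℤ // j < jt},
        ((2 : ℝ≥0∞) ^ (2 * ((j.1 : ℝ) - (jt : ℝ)) * m') *
          (2 : ℝ≥0∞) ^ ((j.1 : ℝ) * α) * wLp n p (F j.1)) ^ q)
        ≤ ∑' j : {j : ℤ // j < jt}, (τ j.1 * wLp n p (F j.1)) ^ q :=
          ENNReal.tsum_le_tsum hterm
      _ = ∑' j : ℤ, Set.indicator {j : ℤ | j < jt}
            (fun j => (τ j * wLp n p (F j)) ^ q) j :=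
          tsum_subtype {j : ℤ | j < jt} (fun j => (τ j * wLp n p (F j)) ^ q)
      _ ≤ ∑' j : ℤ, (τ j * wLp n p (F j)) ^ q :=
          ENNReal.tsum_le_tsum (fun j => Set.indicator_le_self _ _ j)
  -- Put everything together
  set Ctot : ℝ≥0∞ := c3 ^ q * 3 ^ q * 3 with hCtot
  have hc3top : c3 ≠ ∞ := by
    refine ENNReal.mul_ne_top (ENNReal.mul_ne_top ENNReal.coe_ne_top ?_) ?_
    · exact ENNReal.mul_ne_top (by norm_num) (mC_ne_top hp)
    · exact ENNReal.rpow_ne_top_of_nonneg (abs_nonneg α) ENNReal.ofNat_ne_top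
  have hCtop : Ctot ≠ ∞ := by
    refine ENNReal.mul_ne_top (ENNReal.mul_ne_top ?_ ?_) (by norm_num)
    · exact ENNReal.rpow_ne_top_of_nonneg hq0 hc3top
    · exact ENNReal.rpow_ne_top_of_nonneg hq0 (by norm_num)
  refine ⟨Ctot.toNNReal + 1, by positivity, ?_⟩
  have hCle : Ctot ≤ ((Ctot.toNNReal + 1 : ℝ≥0) : ℝ≥0∞) := by
    rw [ENNReal.coe_add, ENNReal.coe_toNNReal hCtop]
    exact le_add_self.trans_eq (add_comm _ _)
  calc (⨆ jt : ℤ, ∑' j : {j : ℤ // j < jt},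
      ((2 : ℝ≥0∞) ^ (2 * ((j.1 : ℝ) - (jt : ℝ)) * m') *
        (2 : ℝ≥0∞) ^ ((j.1 : ℝ) * ((n : ℝ) / p - 1)) * wLp n p (F j.1)) ^ q)
      ≤ ∑' j : ℤ, (τ j * wLp n p (F j)) ^ q := stepE
    _ ≤ c3 ^ q * 3 ^ q * (3 * S) := stepD
    _ = Ctot * S := by rw [hCtot]; ring
    _ ≤ ((Ctot.toNNReal + 1 : ℝ≥0) : ℝ≥0∞) * S := mul_le_mul_left hCle _
    _ = ((Ctot.toNNReal + 1 : ℝ≥0) : ℝ≥0∞) *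
        ∑' j' : ℤ, ((2 : ℝ≥0∞) ^ ((j' : ℝ) * ((n : ℝ) / p - 1)) * wLp n p (G j')) ^ q := rfl
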